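/- Let B be the ℓ_q-ellipsoid in ℝ^d with Euclidean norm, ‖x‖_B = (Σ_i (|x_i|/b_i)^q)^{1/q} with 1 < q < ∞ and b_1 ≥ … ≥ b_d > 0. Then B_t ⊆ t^{1/(q−1)}·C, where C = {y : (Σ_i (|y_i|/b_i^{q/(q−1)})^{2q−2})^{1/(2q−2)} ≤ 1}. -/

import Mathlib

open Pointwise Real

lemma young_eq {p r a c : ℝ} (hpr : p.HolderConjugate r) (ha : 0 ≤ a) (hc : 0 ≤ c)
    (h : a ^ p / p + c ^ r / r ≤ a * c) : a ^ p = c ^ r := by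
  have hp0 : 0 < p := hpr.pos
  have hr0 : 0 < r := hpr.symm.pos
  rcases eq_or_lt_of_le ha with ha0 | ha0
  · rw [← ha0, Real.zero_rpow hpr.ne_zero] at h ⊢
    have h1 : 0 ≤ c ^ r / r := div_nonneg (Real.rpow_nonneg hc r) hpr.symm.nonneg
    have h2 : c ^ r / r ≤ 0 := by simpa [← ha0] using h
    have h3 : c ^ r / r = 0 := le_antisymm h2 h1
    rw [div_eq_zero_iff] at h3
    rcases h3 with h3 | h3
    · exact h3.symm
    · exact absurd h3 (ne_of_gt hr0)
  rcases eq_or_lt_of_le hc with hc0 | hc0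
  · rw [← hc0, Real.zero_rpow hpr.symm.ne_zero] at h ⊢
    have h1 : 0 ≤ a ^ p / p := div_nonneg (Real.rpow_nonneg ha p) hpr.nonneg
    have h2 : a ^ p / p ≤ 0 := by simpa [← hc0] using h
    have h3 : a ^ p / p = 0 := le_antisymm h2 h1
    rw [div_eq_zero_iff] at h3
    rcases h3 with h3 | h3
    · exact h3
    · exact absurd h3 (ne_of_gt hp0)
  by_contra hne
  have hA : 0 < a ^ p := Real.rpow_pos_of_pos ha0 p
  have hC : 0 < c ^ r := Real.rpow_pos_of_pos hc0 r
  have hw : p⁻¹ + r⁻¹ = 1 := hpr.inv_add_inv_eq_one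
  have key := strictConcaveOn_log_Ioi.2 (Set.mem_Ioi.2 hA) (Set.mem_Ioi.2 hC) hne
    (inv_pos.2 hp0) (inv_pos.2 hr0) hw
  rw [smul_eq_mul, smul_eq_mul, smul_eq_mul, smul_eq_mul,
    Real.log_rpow ha0, Real.log_rpow hc0] at key
  have hlhs : p⁻¹ * (p * Real.log a) + r⁻¹ * (r * Real.log c) = Real.log (a * c) := by
    rw [Real.log_mul (ne_of_gt ha0) (ne_of_gt hc0), inv_mul_cancel_left₀ (ne_of_gt hp0),
      inv_mul_cancel_left₀ (ne_of_gt hr0)]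
  rw [hlhs] at key
  have h2 : Real.log (p⁻¹ * a^p + r⁻¹ * c^r) ≤ Real.log (a * c) := by
    apply Real.log_le_log (by positivity)
    calc p⁻¹ * a^p + r⁻¹ * c^r = a^p/p + c^r/r := by
          rw [inv_mul_eq_div, inv_mul_eq_div]
    _ ≤ a * c := h
  exact absurd (lt_of_lt_of_le key h2) (lt_irrefl _)

/-- Let `B` be the `ℓ_q`-ellipsoid `‖x‖_B = (Σ_i (|x_i|/b_i)^q)^{1/q}` in
Euclidean space, `1 < q < ∞`, `b_1 ≥ … ≥ b_d > 0`. Then `B_t ⊆ t^{1/(q−1)} C`, where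
`C = {y : (Σ_i (|y_i|/b_i^{q/(q−1)})^{2q−2})^{1/(2q−2)} ≤ 1}`. -/
theorem stmt18 (d : ℕ) (q : ℝ) (hq : 1 < q) (b : Fin d → ℝ) (hb : ∀ i, 0 < b i)
    (hmono : ∀ i j : Fin d, i ≤ j → b j ≤ b i) (t : ℝ) (ht : 0 ≤ t) :
    {y : EuclideanSpace ℝ (Fin d) |
        (∑ i, (|y i| / b i) ^ q) ^ (1 / q) ≤ 1 ∧
        ∃ z : EuclideanSpace ℝ (Fin d),
          (inner ℝ z y : ℝ) = (∑ i, (|y i| / b i) ^ q) ^ (1 / q) ∧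
          (∀ x : EuclideanSpace ℝ (Fin d),
            (∑ i, (|x i| / b i) ^ q) ^ (1 / q) ≤ 1 → (inner ℝ z x : ℝ) ≤ 1) ∧
          ‖z‖ ≤ t}
      ⊆ (t ^ (1 / (q - 1))) • {y : EuclideanSpace ℝ (Fin d) |
          (∑ i, (|y i| / (b i) ^ (q / (q - 1))) ^ (2 * q - 2)) ^ (1 / (2 * q - 2)) ≤ 1} := by
  have hq0 : 0 < q := lt_trans one_pos hq
  have hq1 : 0 < q - 1 := sub_pos.2 hq
  have h2q : 0 < 2 * q - 2 := by linarith
  have hconj : q.HolderConjugate (q / (q - 1)) := Real.HolderConjugate.conjExponent hq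
  set r : ℝ := q / (q - 1) with hrdef
  have hr0 : 0 < r := hconj.symm.pos
  intro y hy
  obtain ⟨hy1, z, hzy, hzball, hznorm⟩ := hy
  set S : ℝ := ∑ i, (|y i| / b i) ^ q with hSdef
  set s : ℝ := S ^ (1 / q) with hsdef
  have htermnn : ∀ i, 0 ≤ (|y i| / b i) ^ q :=
    fun i => Real.rpow_nonneg (div_nonneg (abs_nonneg _) (hb i).le) q
  have hS0 : 0 ≤ S := Finset.sum_nonneg fun i _ => htermnn i
  have hs0 : 0 ≤ s := Real.rpow_nonneg hS0 _
  rw [Set.mem_smul_set]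
  rcases eq_or_lt_of_le hs0 with hs | hs
  · -- s = 0, so y = 0
    have hSz : S = 0 := by
      rw [← (Real.rpow_eq_zero hS0 (one_div_ne_zero (ne_of_gt hq0)))]
      exact hs.symm
    have hy0 : y = 0 := by
      ext i
      have hterm : (|y i| / b i) ^ q = 0 :=
        (Finset.sum_eq_zero_iff_of_nonneg (fun i _ => htermnn i)).1 hSz i (Finset.mem_univ i)
      have := (Real.rpow_eq_zero (div_nonneg (abs_nonneg _) (hb i).le) (ne_of_gt hq0)).1 hterm
      rw [div_eq_zero_iff] at this
      rcases this with h | h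
      · exact abs_eq_zero.1 h
      · exact absurd h (ne_of_gt (hb i))
    refine ⟨0, ?_, by rw [hy0, smul_zero]⟩
    simp only [Set.mem_setOf_eq]
    have : ∀ i : Fin d, (|(0 : EuclideanSpace ℝ (Fin d)) i| / (b i) ^ (q / (q-1))) ^ (2*q-2) = 0 := by
      intro i
      show (|(0:ℝ)| / (b i) ^ (q / (q-1))) ^ (2*q-2) = 0
      rw [abs_zero, zero_div, Real.zero_rpow (ne_of_gt h2q)]
    rw [Finset.sum_congr rfl (fun i _ => this i), Finset.sum_const, smul_zero,
      Real.zero_rpow (one_div_ne_zero (ne_of_gt h2q))]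
    exact zero_le_one
  · -- s > 0
    have hinner : ∀ (a c : EuclideanSpace ℝ (Fin d)), (inner ℝ a c : ℝ) = ∑ i, a i * c i := by
      intro a c
      simp [PiLp.inner_apply, RCLike.inner_apply, conj_trivial, mul_comm]
    have htpos : 0 < t := by
      rcases eq_or_lt_of_le ht with h0 | h0
      · exfalso
        have hz0 : z = 0 := norm_le_zero_iff.1 (le_of_le_of_eq hznorm h0.symm)
        rw [hz0] at hzy
        simp only [inner_zero_left] at hzy
        exact absurd hzy.symm (ne_of_gt hs)
      · exact h0
    have hSpos : 0 < S := by
      rcases eq_or_lt_of_le hS0 with h0 | h0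
      · exfalso
        rw [hsdef, ← h0, Real.zero_rpow (one_div_ne_zero (ne_of_gt hq0))] at hs
        exact lt_irrefl 0 hs
      · exact h0
    have hsq : s ^ q = S := by
      rw [hsdef, ← Real.rpow_mul hS0, one_div_mul_cancel (ne_of_gt hq0), Real.rpow_one]
    -- Step 1 : dual norm of z is at most 1
    set N : ℝ := ∑ i, (b i * |z i|) ^ r with hNdef
    have hNnn : 0 ≤ N :=
      Finset.sum_nonneg fun i _ => Real.rpow_nonneg (mul_nonneg (hb i).le (abs_nonneg _)) r
    have hN1 : N ≤ 1 := by
      rcases eq_or_lt_of_le hNnn with hN0 | hNpos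
      · rw [← hN0]; exact zero_le_one
      · set x : EuclideanSpace ℝ (Fin d) :=
          WithLp.toLp 2 (fun i => (b i) ^ r * |z i| ^ (r - 2) * z i / N ^ (1/q)) with hxdef
        have hxi : ∀ i, x i = (b i) ^ r * |z i| ^ (r - 2) * z i / N ^ (1/q) := fun i => rfl
        have hx_abs : ∀ i, (|x i| / b i) ^ q = (b i * |z i|) ^ r / N := by
          intro i
          rcases eq_or_ne (z i) 0 with hzi | hzi
          · rw [hxi, hzi, mul_zero, zero_div, abs_zero, zero_div,
              Real.zero_rpow (ne_of_gt hq0), mul_zero,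
              Real.zero_rpow (ne_of_gt hr0), zero_div]
          · have habs : |x i| = (b i * |z i|) ^ (r-1) * b i / N ^ (1/q) := by
              rw [hxi, abs_div, abs_mul, abs_mul,
                abs_of_nonneg (Real.rpow_nonneg (hb i).le r),
                abs_of_nonneg (Real.rpow_nonneg (abs_nonneg _) (r-2)),
                abs_of_nonneg (Real.rpow_nonneg hNnn (1/q)),
                Real.mul_rpow (hb i).le (abs_nonneg _)]
              congr 1
              have h1 : (b i) ^ r = (b i) ^ (r-1) * b i := by
                nth_rewrite 1 [show r = (r-1) + 1 by ring]
                rw [Real.rpow_add_one (ne_of_gt (hb i))]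
              have h2 : |z i| ^ (r-2) * |z i| = |z i| ^ (r-1) := by
                rw [show r - 1 = (r-2) + 1 by ring, Real.rpow_add_one (abs_ne_zero.2 hzi)]
              rw [h1, ← h2]; ring
            have hxb : |x i| / b i = (b i * |z i|) ^ (r-1) / N ^ (1/q) := by
              rw [habs]
              field_simp [ne_of_gt (hb i), ne_of_gt (Real.rpow_pos_of_pos hNpos (1/q))]
            rw [hxb, Real.div_rpow (Real.rpow_nonneg (mul_nonneg (hb i).le (abs_nonneg _)) _)
                (Real.rpow_nonneg hNnn _),
              ← Real.rpow_mul (mul_nonneg (hb i).le (abs_nonneg _)),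
              hconj.symm.sub_one_mul_conj,
              ← Real.rpow_mul hNnn, one_div_mul_cancel (ne_of_gt hq0), Real.rpow_one]
        have hzx : ∀ i, z i * x i = (b i * |z i|) ^ r / N ^ (1/q) := by
          intro i
          rcases eq_or_ne (z i) 0 with hzi | hzi
          · rw [hxi, hzi, mul_zero, zero_div, mul_zero, abs_zero, mul_zero,
              Real.zero_rpow (ne_of_gt hr0), zero_div]
          · have h2 : |z i| ^ (r-2) * (z i * z i) = |z i| ^ r := by
              rw [← abs_mul_abs_self (z i), show r = (r-2) + 1 + 1 by ring,
                Real.rpow_add_one (abs_ne_zero.2 hzi), Real.rpow_add_one (abs_ne_zero.2 hzi),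
                show r - 2 + 1 + 1 - 2 = r - 2 by ring]
              ring
            rw [hxi, Real.mul_rpow (hb i).le (abs_nonneg _), ← h2]
            ring
        have hxnorm : (∑ i, (|x i| / b i) ^ q) ^ (1/q) ≤ 1 := by
          rw [Finset.sum_congr rfl (fun i _ => hx_abs i), ← Finset.sum_div, ← hNdef,
            div_self (ne_of_gt hNpos), Real.one_rpow]
        have hNr : (inner ℝ z x : ℝ) = N ^ (1 - 1/q) := by
          rw [hinner, Finset.sum_congr rfl (fun i _ => hzx i), ← Finset.sum_div, ← hNdef,
            Real.rpow_sub hNpos, Real.rpow_one]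
        have hle := hzball x hxnorm
        rw [hNr] at hle
        have h1r : 1 - 1/q = 1/r := by
          rw [hrdef, one_div_div]
          field_simp
        rw [h1r] at hle
        calc N = (N ^ (1/r)) ^ r := by
              rw [← Real.rpow_mul hNnn, one_div_mul_cancel (ne_of_gt hr0), Real.rpow_one]
        _ ≤ 1 := Real.rpow_le_one (Real.rpow_nonneg hNnn _) hle hr0.le
    -- Step 2 : Hölder equality forces z to be the gradient
    set w : Fin d → ℝ := fun i => |y i| / b i / s with hwdef
    have hwnn : ∀ i, 0 ≤ w i := fun i =>
      div_nonneg (div_nonneg (abs_nonneg _) (hb i).le) hs0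
    have hwq : ∑ i, (w i) ^ q = 1 := by
      have : ∀ i, (w i) ^ q = (|y i| / b i) ^ q / S := by
        intro i
        rw [hwdef]
        simp only
        rw [Real.div_rpow (div_nonneg (abs_nonneg _) (hb i).le) hs0, hsq]
      rw [Finset.sum_congr rfl (fun i _ => this i), ← Finset.sum_div, ← hSdef,
        div_self (ne_of_gt hSpos)]
    have hyoung : ∀ i ∈ Finset.univ, (b i * |z i|) * w i ≤
        (b i * |z i|) ^ r / r + (w i) ^ q / q := fun i _ =>
      Real.young_inequality_of_nonneg (mul_nonneg (hb i).le (abs_nonneg _)) (hwnn i) hconj.symm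
    have hlow : 1 ≤ ∑ i, (b i * |z i|) * w i := by
      have huw : ∀ i, (b i * |z i|) * w i = |z i| * |y i| / s := by
        intro i
        rw [hwdef]
        simp only
        rw [div_div, mul_div_assoc', mul_assoc, mul_div_mul_left _ _ (ne_of_gt (hb i))]
      rw [Finset.sum_congr rfl (fun i _ => huw i), ← Finset.sum_div]
      rw [le_div_iff₀ hs, one_mul]
      calc s = ∑ i, z i * y i := by rw [← hzy, hinner]
      _ ≤ ∑ i, |z i| * |y i| := Finset.sum_le_sum fun i _ => by
            rw [← abs_mul]; exact le_abs_self _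
    have hhigh : ∑ i, ((b i * |z i|) ^ r / r + (w i) ^ q / q) ≤ 1 := by
      rw [Finset.sum_add_distrib, ← Finset.sum_div, ← Finset.sum_div, ← hNdef, hwq]
      calc N / r + 1 / q ≤ 1 / r + 1 / q := by gcongr
      _ = 1 := by rw [one_div, one_div, add_comm, hconj.inv_add_inv_eq_one]
    have hsumeq : ∑ i, (b i * |z i|) * w i =
        ∑ i, ((b i * |z i|) ^ r / r + (w i) ^ q / q) :=
      le_antisymm (Finset.sum_le_sum hyoung) (hhigh.trans hlow)
    have heq : ∀ i, (b i * |z i|) ^ r = (w i) ^ q := by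
      intro i
      refine young_eq hconj.symm (mul_nonneg (hb i).le (abs_nonneg _)) (hwnn i) ?_
      exact le_of_eq (((Finset.sum_eq_sum_iff_of_le hyoung).1 hsumeq i (Finset.mem_univ i)).symm)
    -- Step 3 : coordinates of z
    have hzw : ∀ i, (z i) ^ 2 = (w i) ^ (2*q-2) / (b i) ^ 2 := by
      intro i
      have h1 : b i * |z i| = (w i) ^ (q - 1) := by
        have h := congrArg (fun a : ℝ => a ^ (1/r)) (heq i)
        simp only at h
        rwa [← Real.rpow_mul (mul_nonneg (hb i).le (abs_nonneg _)),
          mul_one_div_cancel (ne_of_gt hr0), Real.rpow_one,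
          ← Real.rpow_mul (hwnn i), mul_one_div, hconj.div_conj_eq_sub_one] at h
      have h2 : |z i| = (w i) ^ (q-1) / b i := by
        rw [← h1, mul_comm, mul_div_assoc, div_self (ne_of_gt (hb i)), mul_one]
      rw [← sq_abs, h2, div_pow]
      congr 1
      rw [← Real.rpow_natCast ((w i) ^ (q-1)) 2, ← Real.rpow_mul (hwnn i),
        show (q-1) * ((2:ℕ):ℝ) = 2*q-2 by push_cast; ring]
    -- Step 4 : sum of squares bound
    have hzsum : ∑ i, (z i) ^ 2 ≤ t ^ 2 := by
      have h1 : ‖z‖ ^ 2 = ∑ i, (z i) ^ 2 := by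
        rw [EuclideanSpace.norm_eq, Real.sq_sqrt (Finset.sum_nonneg fun i _ => sq_nonneg _)]
        exact Finset.sum_congr rfl fun i _ => by rw [Real.norm_eq_abs, sq_abs]
      rw [← h1]
      exact pow_le_pow_left₀ (norm_nonneg z) hznorm 2
    -- Step 5 : bound the C-norm sum
    have hex : (r-1) * (2*q-2) = 2 := by
      rw [hrdef]
      field_simp
      ring
    have hterm2 : ∀ i, (|y i| / (b i) ^ r) ^ (2*q-2) = (z i) ^ 2 * s ^ (2*q-2) := by
      intro i
      have hy_eq : |y i| / (b i) ^ r = w i * s / (b i) ^ (r-1) := by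
        rw [hwdef]
        simp only
        rw [div_mul_cancel₀ _ (ne_of_gt hs), div_div,
          show b i * b i ^ (r-1) = b i ^ r from by
            rw [mul_comm, ← Real.rpow_add_one (ne_of_gt (hb i)), sub_add_cancel]]
      rw [hy_eq, Real.div_rpow (mul_nonneg (hwnn i) hs0) (Real.rpow_nonneg (hb i).le _),
        Real.mul_rpow (hwnn i) hs0, ← Real.rpow_mul (hb i).le, hex,
        show (b i) ^ (2:ℝ) = (b i) ^ 2 from by
          rw [show (2:ℝ) = ((2:ℕ):ℝ) by norm_num, Real.rpow_natCast],
        hzw i]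
      ring
    have hT : (∑ i, (|y i| / (b i) ^ r) ^ (2*q-2)) ≤ t ^ 2 := by
      rw [Finset.sum_congr rfl (fun i _ => hterm2 i), ← Finset.sum_mul]
      calc (∑ i, (z i) ^ 2) * s ^ (2*q-2) ≤ t ^ 2 * 1 :=
            mul_le_mul hzsum (Real.rpow_le_one hs0 hy1 h2q.le)
              (Real.rpow_nonneg hs0 _) (by positivity)
      _ = t ^ 2 := mul_one _
    -- Step 6 : conclude
    set c : ℝ := t ^ (1/(q-1)) with hcdef
    have hc : 0 < c := Real.rpow_pos_of_pos htpos _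
    have hT0 : 0 ≤ ∑ i, (|y i| / (b i) ^ r) ^ (2*q-2) :=
      Finset.sum_nonneg fun i _ => Real.rpow_nonneg
        (div_nonneg (abs_nonneg _) (Real.rpow_nonneg (hb i).le _)) _
    have hTc : (∑ i, (|y i| / (b i) ^ r) ^ (2*q-2)) ^ (1/(2*q-2)) ≤ c := by
      calc (∑ i, (|y i| / (b i) ^ r) ^ (2*q-2)) ^ (1/(2*q-2))
          ≤ (t ^ 2) ^ (1/(2*q-2)) := Real.rpow_le_rpow hT0 hT (by positivity)
      _ = c := by
          rw [hcdef, ← Real.rpow_natCast t 2, ← Real.rpow_mul ht]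
          congr 1
          push_cast
          field_simp
    refine ⟨c⁻¹ • y, ?_, smul_inv_smul₀ (ne_of_gt hc) y⟩
    simp only [Set.mem_setOf_eq]
    have hsmul : ∀ i, (|(c⁻¹ • y) i| / (b i) ^ r) ^ (2*q-2)
        = (c⁻¹) ^ (2*q-2) * (|y i| / (b i) ^ r) ^ (2*q-2) := by
      intro i
      have hap : (c⁻¹ • y) i = c⁻¹ * y i := rfl
      rw [hap, abs_mul, abs_of_pos (inv_pos.2 hc), mul_div_assoc,
        Real.mul_rpow (inv_nonneg.2 hc.le)
          (div_nonneg (abs_nonneg _) (Real.rpow_nonneg (hb i).le _))]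
    rw [Finset.sum_congr rfl (fun i _ => hsmul i), ← Finset.mul_sum,
      Real.mul_rpow (Real.rpow_nonneg (inv_nonneg.2 hc.le) _) hT0,
      ← Real.rpow_mul (inv_nonneg.2 hc.le), mul_one_div_cancel (ne_of_gt h2q), Real.rpow_one]
    exact le_trans (mul_le_mul_of_nonneg_left hTc (inv_nonneg.2 hc.le))
      (le_of_eq (inv_mul_cancel₀ (ne_of_gt hc)))
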